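/- arXiv:2308.14545 — 7 statements merged into one kernel-verified Lean document; each statement's English description precedes it below -/
import Mathlib

section
/- For every integral allocation A of items M to agents with XOS valuations v_1,…,v_n, and every partition S_1,…,S_t of M, the sum over k of the contributions C_V^A(S_k) is at most the social welfare ∑_i v_i(A_i), where C_V^A(S) = ∑_i (v_i(A_i) − v_i(A_i ∖ S)). -/
/-- For an integral allocation `A` (pairwise disjoint bundles) of items to
`n` agents with XOS valuations `v i` (max over additive components with weights `w i k`),
and any partition `S_1, …, S_t` of the item set, the total contribution
`∑ k ∑ i (v i (A i) - v i (A i \ S k))` is at most the social welfare `∑ i v i (A i)`. -/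
theorem stmt_1 {ι K : Type*} [Fintype ι] [DecidableEq ι] [Fintype K] [Nonempty K]
    (n t : ℕ)
    (w : Fin n → K → ι → ℝ) (hw : ∀ i k j, 0 ≤ w i k j)
    (v : Fin n → Finset ι → ℝ)
    (hv : ∀ i (S : Finset ι),
      v i S = Finset.univ.sup' Finset.univ_nonempty (fun k => ∑ j ∈ S, w i k j))
    (A : Fin n → Finset ι)
    (hAdisj : ∀ i i', i ≠ i' → Disjoint (A i) (A i'))
    (S : Fin t → Finset ι)
    (hSdisj : ∀ k k', k ≠ k' → Disjoint (S k) (S k'))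
    (hScover : Finset.univ.biUnion S = Finset.univ) :
    ∑ k, ∑ i, (v i (A i) - v i (A i \ S k)) ≤ ∑ i, v i (A i) := by
  rw [Finset.sum_comm]
  apply Finset.sum_le_sum
  intro i _
  -- choose the maximizing additive component for A i
  obtain ⟨κ, -, hκ⟩ := Finset.exists_mem_eq_sup' (Finset.univ_nonempty (α := K))
    (fun k => ∑ j ∈ A i, w i k j)
  have hviA : v i (A i) = ∑ j ∈ A i, w i κ j := by rw [hv]; exact hκ
  have key : ∑ k, ∑ j ∈ A i ∩ S k, w i κ j = ∑ j ∈ A i, w i κ j := by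
    rw [← Finset.sum_biUnion]
    · congr 1
      ext j
      simp only [Finset.mem_biUnion, Finset.mem_inter, Finset.mem_univ, true_and]
      constructor
      · rintro ⟨k, hj, -⟩; exact hj
      · intro hj
        have hj2 : j ∈ Finset.univ.biUnion S := by rw [hScover]; exact Finset.mem_univ j
        obtain ⟨k, -, hk⟩ := Finset.mem_biUnion.mp hj2
        exact ⟨k, hj, hk⟩
    · intro a _ b _ hab
      exact Finset.disjoint_left.mpr fun x hx hx' => Finset.disjoint_left.mp
        (hSdisj a b hab) (Finset.mem_inter.mp hx).2 (Finset.mem_inter.mp hx').2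
  calc ∑ k, (v i (A i) - v i (A i \ S k))
      ≤ ∑ k, ∑ j ∈ A i ∩ S k, w i κ j := by
        apply Finset.sum_le_sum
        intro k _
        have h2 : ∑ j ∈ A i \ S k, w i κ j ≤ v i (A i \ S k) := by
          rw [hv]; exact Finset.le_sup' (fun k' => ∑ j ∈ A i \ S k, w i k' j) (Finset.mem_univ κ)
        have h3 := Finset.sum_inter_add_sum_sdiff (A i) (S k) (w i κ)
        linarith
    _ = v i (A i) := by rw [key, hviA]
end

section
/- In the two-agent four-item instance above, no randomized allocation guarantees both agents ex-ante expected value strictly greater than 3/2; since both MMS values equal 2, the best ex-ante MMS approximation on this instance is at most 3/4. -/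
/-- In the two-agent four-item instance, for any randomized allocation (a
distribution `p` over bipartitions, agent 1 receiving `S` and agent 2 receiving `Sᶜ`),
the minimum of the two ex-ante expected values is at most `3/2 = (3/4) * 2`; since both
maximin shares equal `2`, the ex-ante MMS approximation is at most `3/4`. -/
theorem stmt_7 (v1 v2 : Finset (Fin 4) → ℝ)
    (hv1 : ∀ S, v1 S = max (∑ j ∈ S, (![1, 1, 0, 0] : Fin 4 → ℝ) j)
                           (∑ j ∈ S, (![0, 0, 1, 1] : Fin 4 → ℝ) j))
    (hv2 : ∀ S, v2 S = max (∑ j ∈ S, (![1, 0, 0, 1] : Fin 4 → ℝ) j)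
                           (∑ j ∈ S, (![0, 1, 1, 0] : Fin 4 → ℝ) j))
    (p : Finset (Fin 4) → ℝ) (hp0 : ∀ S, 0 ≤ p S) (hp1 : ∑ S, p S = 1) :
    min (∑ S, p S * v1 S) (∑ S, p S * v2 Sᶜ) ≤ (3 / 4) * 2 := by
  have e : ∀ f : Fin 4 → ℝ, ∀ T : Finset (Fin 4),
      ∑ j ∈ T, f j = ∑ j : Fin 4, if j ∈ T then f j else 0 := by
    intro f T
    rw [Finset.sum_ite_mem, Finset.univ_inter]
  have key : ∀ S : Finset (Fin 4), v1 S + v2 Sᶜ ≤ 3 := by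
    intro S
    rw [hv1, hv2, e _ S, e _ S, e _ Sᶜ, e _ Sᶜ]
    by_cases h0 : (0 : Fin 4) ∈ S <;> by_cases h1 : (1 : Fin 4) ∈ S <;>
      by_cases h2 : (2 : Fin 4) ∈ S <;> by_cases h3 : (3 : Fin 4) ∈ S <;>
      simp only [Fin.sum_univ_four, Finset.mem_compl, h0, h1, h2, h3, if_true, if_false,
        not_true_eq_false, not_false_eq_true, ite_true, ite_false] <;>
      norm_num [max_le_iff, Matrix.cons_val_two, Matrix.cons_val_three, Matrix.vecHead,
        Matrix.vecTail]
  have hsum : (∑ S, p S * v1 S) + (∑ S, p S * v2 Sᶜ) ≤ 3 := by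
    rw [← Finset.sum_add_distrib]
    calc ∑ S, (p S * v1 S + p S * v2 Sᶜ) ≤ ∑ S : Finset (Fin 4), p S * 3 := by
          apply Finset.sum_le_sum
          intro S _
          rw [← mul_add]
          exact mul_le_mul_of_nonneg_left (key S) (hp0 S)
      _ = 3 := by rw [← Finset.sum_mul, hp1]; ring
  have h1 := min_le_left (∑ S, p S * v1 S) (∑ S, p S * v2 Sᶜ)
  have h2 := min_le_right (∑ S, p S * v1 S) (∑ S, p S * v2 Sᶜ)
  linarith
end

section
/- Removing one item and one agent from a fair-division instance does not decrease the maximin-share value of any remaining agent: if MMS_i is agent i's maximin share with n agents and item set M, then for any item b, agent i's maximin share with n−1 agents and item set M∖{b} is at least MMS_i. -/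
/-- Removing one item and one agent does not decrease the maximin share of
a remaining agent: for a monotone valuation `v`, any partition `P` of `M` into `n + 1`
bundles, and any item `b ∈ M`, there is a partition `Q` of `M \ {b}` into `n` bundles,
each of value at least the minimum value of the bundles of `P`. -/
theorem stmt_10 {ι : Type*} [DecidableEq ι] (n : ℕ) (hn : 0 < n)
    (v : Finset ι → ℝ) (hmono : ∀ S T, S ⊆ T → v S ≤ v T)
    (M : Finset ι) (b : ι) (hb : b ∈ M)
    (P : Fin (n + 1) → Finset ι)
    (hPdisj : ∀ a a', a ≠ a' → Disjoint (P a) (P a'))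
    (hPcover : Finset.univ.biUnion P = M) :
    ∃ Q : Fin n → Finset ι,
      (∀ a a', a ≠ a' → Disjoint (Q a) (Q a')) ∧
      Finset.univ.biUnion Q = M.erase b ∧
      ∀ a, (Finset.univ.inf' Finset.univ_nonempty fun c => v (P c)) ≤ v (Q a) := by
  haveI : NeZero n := ⟨hn.ne'⟩
  -- find the bundle containing b
  have hbU : b ∈ Finset.univ.biUnion P := hPcover ▸ hb
  obtain ⟨j, -, hjb⟩ := Finset.mem_biUnion.mp hbU
  set Q : Fin n → Finset ι := fun a =>
    P (j.succAbove a) ∪ (if a = 0 then (P j).erase b else ∅) with hQ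
  have hdisjmem : ∀ (c c' : Fin (n+1)) (x : ι), c ≠ c' → x ∈ P c → x ∉ P c' := by
    intro c c' x hne hx hx'
    exact Finset.disjoint_left.mp (hPdisj c c' hne) hx hx'
  refine ⟨Q, ?_, ?_, ?_⟩
  · intro a a' hne
    rw [Finset.disjoint_left]
    intro x hx hx'
    simp only [hQ, Finset.mem_union] at hx hx'
    have hsne : j.succAbove a ≠ j.succAbove a' := fun h => hne (Fin.succAbove_right_injective h)
    rcases hx with hx | hx <;> rcases hx' with hx' | hx'
    · exact hdisjmem _ _ x hsne hx hx'
    · have : x ∈ P j := by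
        by_cases h : a' = 0 <;> simp [h] at hx'
        exact hx'.2
      exact hdisjmem _ _ x (Fin.succAbove_ne j a) hx this
    · have : x ∈ P j := by
        by_cases h : a = 0 <;> simp [h] at hx
        exact hx.2
      exact hdisjmem _ _ x (Fin.succAbove_ne j a') hx' this
    · by_cases h : a = 0 <;> by_cases h' : a' = 0 <;> simp [h, h'] at hx hx' hne
  · ext x
    simp only [Finset.mem_biUnion, Finset.mem_univ, true_and, hQ, Finset.mem_union,
      Finset.mem_erase]
    constructor
    · rintro ⟨a, ha | ha⟩
      · refine ⟨fun hxb => ?_, hPcover ▸ Finset.mem_biUnion.mpr ⟨_, Finset.mem_univ _, ha⟩⟩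
        subst hxb
        exact hdisjmem _ _ x (Fin.succAbove_ne j a) ha hjb
      · by_cases h : a = 0 <;> simp [h] at ha
        exact ⟨ha.1, hPcover ▸ Finset.mem_biUnion.mpr ⟨j, Finset.mem_univ _, ha.2⟩⟩
    · rintro ⟨hxb, hxM⟩
      obtain ⟨c, -, hc⟩ := Finset.mem_biUnion.mp (hPcover ▸ hxM : x ∈ Finset.univ.biUnion P)
      by_cases hcj : c = j
      · exact ⟨0, Or.inr (by simp [Finset.mem_erase, hxb, hcj ▸ hc])⟩
      · obtain ⟨a, ha⟩ := Fin.exists_succAbove_eq hcj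
        exact ⟨a, Or.inl (ha ▸ hc)⟩
  · intro a
    refine le_trans (Finset.inf'_le _ (Finset.mem_univ (j.succAbove a))) ?_
    exact hmono _ _ (Finset.subset_union_left)
end

section
/- Let F be a half-integral complete allocation (f_{i,j} ∈ {0, 1/2, 1}, ∑_i f_{i,j} = 1) of m items to n agents with additive valuations. Then there exist two integral allocations A^1, A^2 such that (i) for every agent i and item j, the fraction of the two allocations giving b_j to i equals f_{i,j} (so the uniform mixture R over {A^1,A^2} satisfies v_i(R) = v_i(F)), and (ii) for every agent i and r ∈ {1,2}, v_i(A^r_i) ≥ v_i(F) − (1/2)·max{v_i(b_j) : f_{i,j} = 1/2}. -/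
private def contractM {V : Type} [DecidableEq V] (e : V)
    (M : V × Bool → Option (V × Bool)) : V × Bool → Option (V × Bool) :=
  fun p =>
    if p.1 = e then none else
    (M p).bind (fun q =>
      if q.1 = e then
        (M (e, !q.2)).bind (fun r => if r.1 = e then none else some r)
      else some q)

private lemma xor_solve {V : Type} [DecidableEq V] (S : Finset V) :
    ∀ (M : V × Bool → Option (V × Bool)),
      (∀ p q, M p = some q → M q = some p) →
      (∀ p, M p ≠ some p) →
      (∀ p q, M p = some q → p.1 ∈ S) →
      ∃ x : V → Bool, ∀ p q, M p = some q → ((x p.1 = p.2) ↔ ¬ (x q.1 = q.2)) := by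
  induction S using Finset.strongInduction with
  | _ S ih =>
  intro M hsymm hne hsupp
  rcases S.eq_empty_or_nonempty with rfl | ⟨e, he⟩
  · exact ⟨fun _ => true, fun p q h => absurd (hsupp p q h) (by simp)⟩
  -- basic facts about ports of e
  have hport : ∀ s : Bool, ∀ q, M (e, s) = some q → q.1 = e → q = (e, !s) := by
    intro s q hq hqe
    have h1 : q = (e, q.2) := Prod.ext hqe rfl
    suffices hq2 : q.2 = !s by rw [h1, hq2]
    rw [h1] at hq
    rcases s <;> rcases hb : q.2
    · rw [hb] at hq; exact absurd hq (hne _)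
    · simp [hb]
    · simp [hb]
    · rw [hb] at hq; exact absurd hq (hne _)
  set M' := contractM e M with hM'
  have hsymm' : ∀ p q, M' p = some q → M' q = some p := by
    intro p q h
    simp only [hM', contractM] at h ⊢
    by_cases hp : p.1 = e
    · simp [hp] at h
    rw [if_neg hp] at h
    rcases hMp : M p with _ | z
    · rw [hMp] at h; simp at h
    rw [hMp, Option.bind_some] at h
    by_cases hz : z.1 = e
    · rw [if_pos hz] at h
      rcases hMz : M (e, !z.2) with _ | r
      · rw [hMz] at h; simp at h
      rw [hMz, Option.bind_some] at h
      by_cases hr : r.1 = e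
      · simp [hr] at h
      rw [if_neg hr] at h
      simp only [Option.some.injEq] at h
      subst h
      rw [if_neg hr, hsymm _ _ hMz, Option.bind_some, if_pos rfl, Bool.not_not]
      have hze : z = (e, z.2) := by rcases z with ⟨z1, z2⟩; simp only at hz; subst hz; rfl
      rw [← hze, hsymm _ _ hMp, Option.bind_some, if_neg hp]
    · rw [if_neg hz] at h
      simp only [Option.some.injEq] at h
      subst h
      rw [if_neg hz, hsymm _ _ hMp, Option.bind_some, if_neg hp]
  have hne' : ∀ p, M' p ≠ some p := by
    intro p h
    simp only [hM', contractM] at h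
    by_cases hp : p.1 = e
    · simp [hp] at h
    rw [if_neg hp] at h
    rcases hMp : M p with _ | z
    · rw [hMp] at h; simp at h
    rw [hMp, Option.bind_some] at h
    by_cases hz : z.1 = e
    · rw [if_pos hz] at h
      rcases hMz : M (e, !z.2) with _ | r
      · rw [hMz] at h; simp at h
      rw [hMz, Option.bind_some] at h
      by_cases hr : r.1 = e
      · simp [hr] at h
      rw [if_neg hr] at h
      simp only [Option.some.injEq] at h
      subst h
      have h3 := hsymm _ _ hMz
      rw [hMp] at h3
      simp only [Option.some.injEq] at h3
      have h4 : z.2 = !z.2 := congrArg Prod.snd h3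
      simp at h4
    · rw [if_neg hz] at h
      simp only [Option.some.injEq] at h
      subst h
      exact hne _ hMp
  have hsupp' : ∀ p q, M' p = some q → p.1 ∈ S.erase e := by
    intro p q h
    simp only [hM', contractM] at h
    by_cases hp : p.1 = e
    · simp [hp] at h
    rw [if_neg hp] at h
    rcases hMp : M p with _ | z
    · rw [hMp] at h; simp at h
    exact Finset.mem_erase.2 ⟨hp, hsupp _ _ hMp⟩
  obtain ⟨x', hx'⟩ := ih (S.erase e) (Finset.erase_ssubset he) M' hsymm' hne' hsupp'
  -- choose the value b at e
  have hbex : ∃ b : Bool,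
      (∀ q, M (e, false) = some q → q.1 ≠ e → ((b = false) ↔ ¬ (x' q.1 = q.2))) ∧
      (∀ q, M (e, true) = some q → q.1 ≠ e → ((b = true) ↔ ¬ (x' q.1 = q.2))) := by
    rcases hM0 : M (e, false) with _ | q0
    · rcases hM1 : M (e, true) with _ | q1
      · exact ⟨true, by simp, by simp⟩
      · by_cases hq1 : q1.1 = e
        · exact ⟨true, by simp, fun q hq hqe => by
            injection hq with hq; subst hq; exact absurd hq1 hqe⟩
        · refine ⟨!(x' q1.1 == q1.2), by simp, fun q hq hqe => ?_⟩
          injection hq with hq; subst hq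
          by_cases hx : x' q1.1 = q1.2 <;> simp [hx]
    · by_cases hq0 : q0.1 = e
      · -- q0 = (e, true), and then M (e,true) = some (e,false)
        have hq0' := hport false q0 hM0 hq0
        refine ⟨true, fun q hq hqe => ?_, fun q hq hqe => ?_⟩
        · injection hq with hq; subst hq; exact absurd hq0 hqe
        · have : M (e, true) = some (e, false) := by
            have := hsymm _ _ hM0; rw [hq0'] at this; simpa using this
          rw [this] at hq; simp only [Option.some.injEq] at hq; subst hq; simp at hqe
      · refine ⟨(x' q0.1 == q0.2), fun q hq hqe => ?_, fun q hq hqe => ?_⟩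
        · injection hq with hq; subst hq
          by_cases hx : x' q0.1 = q0.2 <;> simp [hx]
        · -- chain: M' q0 = some q
          have hM'q0 : M' q0 = some q := by
            simp only [hM', contractM]
            rw [if_neg hq0, hsymm _ _ hM0, Option.bind_some, if_pos rfl]
            simp only [Bool.not_false]
            rw [hq, Option.bind_some, if_neg hqe]
          have hcon := hx' _ _ hM'q0
          by_cases hx0 : x' q0.1 = q0.2
          · simp only [hx0, true_iff] at hcon
            simp [hx0, hcon]
          · simp only [hx0, false_iff, not_not] at hcon
            simp [hx0, hcon]
  obtain ⟨b, hb0, hb1⟩ := hbex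
  refine ⟨Function.update x' e b, ?_⟩
  have hxe : Function.update x' e b e = b := Function.update_self e b x'
  have hxo : ∀ v : V, v ≠ e → Function.update x' e b v = x' v := fun v hv =>
    Function.update_of_ne hv b x'
  have key : ∀ (s : Bool) (q : V × Bool), M (e, s) = some q →
      ((Function.update x' e b e = s) ↔ ¬ (Function.update x' e b q.1 = q.2)) := by
    intro s q hq
    by_cases hqe : q.1 = e
    · have hq2 := hport s q hq hqe
      subst hq2
      dsimp only
      simp only [hxe]
      rcases b <;> rcases s <;> simp
    · rw [hxe, hxo q.1 hqe]
      rcases s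
      · exact hb0 q hq hqe
      · exact hb1 q hq hqe
  intro p q h
  by_cases hpe : p.1 = e
  · rcases p with ⟨p1, s⟩
    simp only at hpe; subst hpe
    exact key s q h
  by_cases hqe : q.1 = e
  · have h2 := hsymm _ _ h
    rcases q with ⟨q1, s⟩
    simp only at hqe; subst hqe
    have := key s p h2
    tauto
  · have hM'p : M' p = some q := by
      simp only [hM', contractM]
      rw [if_neg hpe, h, Option.bind_some, if_neg hqe]
    have := hx' _ _ hM'p
    rw [hxo p.1 hpe, hxo q.1 hqe]
    exact this

private lemma signed_bound (N : ℕ) : ∀ (l : List (ℝ × Bool)), l.length ≤ N →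
    l.Pairwise (fun a b => b.1 ≤ a.1) →
    (∀ p ∈ l, 0 ≤ p.1) →
    (∀ (t : ℕ) (h : 2*t+1 < l.length), (l[2*t]'(by omega)).2 = !(l[2*t+1]'h).2) →
    |(l.map (fun p => cond p.2 p.1 (-p.1))).sum| ≤ ((l.map Prod.fst).headD 0) := by
  induction N with
  | zero =>
    intro l hl _ _ _
    have : l = [] := List.eq_nil_of_length_eq_zero (Nat.le_zero.1 hl)
    subst this; simp
  | succ N ihN =>
    intro l hl hsort hpos hpair
    rcases l with _ | ⟨a, l⟩
    · simp
    rcases l with _ | ⟨b, rest⟩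
    · have ha := hpos a (by simp)
      rcases hab : a.2 <;> simp [hab, abs_le] <;>
        first
        | (constructor <;> linarith)
        | linarith
    -- two or more elements
    have hab : a.2 = !b.2 := by
      have := hpair 0 (by simp)
      simpa using this
    have hba : b.1 ≤ a.1 := (List.pairwise_cons.1 hsort).1 b (by simp)
    have hb0 : 0 ≤ b.1 := hpos b (by simp)
    have ha0 : 0 ≤ a.1 := hpos a (by simp)
    have hrest_sort : rest.Pairwise (fun a b => b.1 ≤ a.1) := hsort.of_cons.of_cons
    have hrest_pos : ∀ p ∈ rest, 0 ≤ p.1 := fun p hp => hpos p (by simp [hp])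
    have hrest_pair : ∀ (t : ℕ) (h : 2*t+1 < rest.length),
        (rest[2*t]'(by omega)).2 = !(rest[2*t+1]'h).2 := by
      intro t h
      have h2 : 2*(t+1)+1 < (a :: b :: rest).length := by simp; omega
      have := hpair (t+1) h2
      have e1 : (a :: b :: rest)[2*(t+1)]'(by simp; omega) = rest[2*t]'(by omega) := by
        have : 2*(t+1) = (2*t) + 1 + 1 := by omega
        simp [this]
      have e2 : (a :: b :: rest)[2*(t+1)+1]'h2 = rest[2*t+1]'h := by
        have : 2*(t+1)+1 = (2*t+1) + 1 + 1 := by omega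
        simp [this]
      rw [e1, e2] at this
      exact this
    have hlen : rest.length ≤ N := by
      simp at hl
      omega
    have IH := ihN rest hlen hrest_sort hrest_pos hrest_pair
    have hhead : ((rest.map Prod.fst).headD 0) ≤ b.1 := by
      rcases rest with _ | ⟨c, rest'⟩
      · simpa using hb0
      · simp only [List.map_cons, List.headD_cons]
        exact (List.pairwise_cons.1 hsort.of_cons).1 c (by simp)
    set S := (rest.map (fun p => if p.2 = true then p.1 else -p.1)).sum with hS
    set H0 := (rest.map Prod.fst).headD 0 with hH0
    rw [abs_le] at IH ⊢
    obtain ⟨IH1, IH2⟩ := IH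
    simp only [List.map_cons, List.sum_cons, List.headD_cons]
    rcases hb2 : b.2 <;> rw [hb2] at hab <;> simp only [hab] <;> norm_num <;>
      constructor <;> linarith

private lemma list_sum_finset {α : Type} (s : Finset α) (g : α → ℝ) :
    (s.toList.map g).sum = ∑ i ∈ s, g i := by
  have h1 : ((s.toList.map g : List ℝ) : Multiset ℝ).sum = ((s.val.map g)).sum := by
    rw [← Multiset.map_coe, Finset.coe_toList]
  rw [Multiset.sum_coe] at h1
  rw [h1]
  rfl

private def partnerIdx (r : ℕ) : ℕ := if r % 2 = 0 then r + 1 else r - 1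

private lemma partnerIdx_partnerIdx {r n : ℕ} (hr : r < n) (hp : partnerIdx r < n) :
    partnerIdx (partnerIdx r) = r := by
  unfold partnerIdx at *
  split_ifs at * <;> omega

private lemma partnerIdx_ne (r : ℕ) : partnerIdx r ≠ r := by
  unfold partnerIdx; split_ifs <;> omega

/-- Half-integral rounding. For a half-integral complete fractional
allocation (`f i j ∈ {0, 1/2, 1}`, `∑ i, f i j = 1`) and additive valuations `val i`,
there are two integral allocations `A1, A2` such that (i) the fraction of the two
allocations giving item `j` to agent `i` equals `f i j` (so the uniform mixture has the
same ex-ante values as `f`), and (ii) each agent's value in either allocation is at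
least her fractional value minus half of any upper bound `c ≥ 0` on the values of her
half-owned items (in particular, minus half of the maximum such value, with the maximum
over an empty set taken to be `0`). -/
theorem stmt_11 (n m : ℕ)
    (val : Fin n → Fin m → ℝ) (hval : ∀ i j, 0 ≤ val i j)
    (f : Fin n → Fin m → ℝ)
    (hhalf : ∀ i j, f i j = 0 ∨ f i j = 1 / 2 ∨ f i j = 1)
    (hcomp : ∀ j, ∑ i, f i j = 1) :
    ∃ A1 A2 : Fin m → Fin n,
      (∀ i j, ((if A1 j = i then (1 : ℝ) else 0) + (if A2 j = i then 1 else 0))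
          = 2 * f i j) ∧
      (∀ i, (∑ j ∈ Finset.univ.filter (fun j => A1 j = i), val i j)
            + (∑ j ∈ Finset.univ.filter (fun j => A2 j = i), val i j)
          = 2 * ∑ j, val i j * f i j) ∧
      (∀ i (c : ℝ), 0 ≤ c → (∀ j, f i j = 1 / 2 → val i j ≤ c) →
        (∑ j, val i j * f i j) - c / 2
            ≤ ∑ j ∈ Finset.univ.filter (fun j => A1 j = i), val i j ∧
        (∑ j, val i j * f i j) - c / 2
            ≤ ∑ j ∈ Finset.univ.filter (fun j => A2 j = i), val i j) := by
  classical
  have hnn : ∀ i j, 0 ≤ f i j := by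
    intro i j; rcases hhalf i j with h | h | h <;> rw [h] <;> norm_num
  have hcard : ∀ j, 2 * (Finset.univ.filter (fun i => f i j = 1)).card
      + (Finset.univ.filter (fun i => f i j = 1/2)).card = 2 := by
    intro j
    have e1 : (1:ℝ) = ((Finset.univ.filter (fun i => f i j = 1)).card : ℝ)
        + ((Finset.univ.filter (fun i => f i j = 1/2)).card : ℝ)/2 := by
      calc (1:ℝ) = ∑ i, f i j := (hcomp j).symm
      _ = ∑ i, ((if f i j = 1 then (1:ℝ) else 0) + (if f i j = 1/2 then (1:ℝ) else 0)/2) := by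
          apply Finset.sum_congr rfl; intro i _
          rcases hhalf i j with h|h|h <;> rw [h] <;> norm_num
      _ = _ := by
          rw [Finset.sum_add_distrib, ← Finset.sum_div, Finset.sum_boole, Finset.sum_boole]
    have e2 : (2:ℝ) = 2 * ((Finset.univ.filter (fun i => f i j = 1)).card : ℝ)
        + ((Finset.univ.filter (fun i => f i j = 1/2)).card : ℝ) := by linarith
    exact_mod_cast e2.symm
  have hfull_unique : ∀ j i, f i j = 1 → ∀ i', i' ≠ i → f i' j = 0 := by
    intro j i hi i' hii
    have hsum := hcomp j
    rw [← Finset.sum_erase_add _ _ (Finset.mem_univ i), hi] at hsum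
    have h0 : ∑ x ∈ Finset.univ.erase i, f x j = 0 := by linarith
    exact (Finset.sum_eq_zero_iff_of_nonneg (fun x _ => hnn x j)).1 h0 i'
      (Finset.mem_erase.2 ⟨hii, Finset.mem_univ i'⟩)
  have hfullEx : ∀ j, (Finset.univ.filter (fun i => f i j = 1/2)).card ≠ 2 →
      ∃ i, f i j = 1 := by
    intro j h
    have hc := hcard j
    have h1 : (Finset.univ.filter (fun i => f i j = 1)).card ≠ 0 := by omega
    obtain ⟨i, hi⟩ := Finset.card_ne_zero.1 h1
    exact ⟨i, (Finset.mem_filter.1 hi).2⟩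
  have hmemhalf : ∀ i j, f i j = 1/2 →
      (Finset.univ.filter (fun i => f i j = 1/2)).card = 2 := by
    intro i j hij
    by_contra h2
    obtain ⟨i0, hi0⟩ := hfullEx j h2
    by_cases he : i0 = i
    · rw [he, hij] at hi0; norm_num at hi0
    · have := hfull_unique j i0 hi0 i (fun e => he e.symm)
      rw [this] at hij; norm_num at hij
  have hchoice : ∀ j, ∃ p : Fin n × Fin n,
      if (Finset.univ.filter (fun i => f i j = 1/2)).card = 2 then
        (p.1 ≠ p.2 ∧ f p.1 j = 1/2 ∧ f p.2 j = 1/2 ∧ ∀ i, i ≠ p.1 → i ≠ p.2 → f i j = 0)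
      else (p.1 = p.2 ∧ f p.1 j = 1 ∧ ∀ i, i ≠ p.1 → f i j = 0) := by
    intro j
    by_cases h2 : (Finset.univ.filter (fun i => f i j = 1/2)).card = 2
    · obtain ⟨a, b, hab, hset⟩ := Finset.card_eq_two.1 h2
      have hma : a ∈ Finset.univ.filter (fun i => f i j = 1/2) := by rw [hset]; simp
      have hmb : b ∈ Finset.univ.filter (fun i => f i j = 1/2) := by rw [hset]; simp
      have hfa := (Finset.mem_filter.1 hma).2
      have hfb := (Finset.mem_filter.1 hmb).2
      refine ⟨(a, b), ?_⟩
      rw [if_pos h2]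
      refine ⟨hab, hfa, hfb, ?_⟩
      intro i hia hib
      have hnot : i ∉ Finset.univ.filter (fun i => f i j = 1/2) := by
        rw [hset]; simp [hia, hib]
      have hne2 : f i j ≠ 1/2 := fun hc => hnot (Finset.mem_filter.2 ⟨Finset.mem_univ i, hc⟩)
      rcases hhalf i j with h0|h0|h0
      · exact h0
      · exact absurd h0 hne2
      · exfalso
        have := hfull_unique j i h0 a (fun e => hia e.symm)
        rw [this] at hfa; norm_num at hfa
    · obtain ⟨i0, hi0⟩ := hfullEx j h2
      refine ⟨(i0, i0), ?_⟩
      rw [if_neg h2]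
      exact ⟨rfl, hi0, fun i hi => hfull_unique j i0 hi0 i hi⟩
  choose o ho using hchoice
  set wa : Fin m → Fin n := fun j => (o j).1 with hwa
  set wb : Fin m → Fin n := fun j => (o j).2 with hwb
  set L : Fin n → List (Fin m) := fun i =>
    (Finset.univ.filter (fun j => f i j = 1/2)).toList.mergeSort
      (fun a b => decide (val i b ≤ val i a)) with hL
  have hLperm : ∀ i, (L i).Perm (Finset.univ.filter (fun j => f i j = 1/2)).toList :=
    fun i => List.mergeSort_perm _ _
  have hLmem : ∀ i j, j ∈ L i ↔ f i j = 1/2 := by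
    intro i j
    rw [(hLperm i).mem_iff, Finset.mem_toList, Finset.mem_filter]
    simp
  have hLnd : ∀ i, (L i).Nodup := fun i =>
    ((hLperm i).nodup_iff).2 (Finset.nodup_toList _)
  have hLsort : ∀ i, (L i).Pairwise (fun a b => val i b ≤ val i a) := by
    intro i
    have h := List.pairwise_mergeSort (le := fun a b => decide (val i b ≤ val i a))
      (fun a b c hab hbc => by
        simp only [decide_eq_true_eq] at *; exact le_trans hbc hab)
      (fun a b => by
        simp only [Bool.or_eq_true, decide_eq_true_eq]; exact le_total (val i b) (val i a))
      (Finset.univ.filter (fun j => f i j = 1/2)).toList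
    exact h.imp (fun hab => by simpa using hab)
  set M : Fin m × Bool → Option (Fin m × Bool) := fun p =>
    if (Finset.univ.filter (fun i => f i p.1 = 1/2)).card = 2 then
      ((L (cond p.2 (wb p.1) (wa p.1)))[(partnerIdx
          ((L (cond p.2 (wb p.1) (wa p.1))).idxOf p.1))]?).map
        (fun j' => (j', decide (wb j' = cond p.2 (wb p.1) (wa p.1))))
    else none with hM
  have hw2 : ∀ j, (Finset.univ.filter (fun i => f i j = 1/2)).card = 2 →
      (wa j ≠ wb j ∧ f (wa j) j = 1/2 ∧ f (wb j) j = 1/2 ∧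
        ∀ i, i ≠ wa j → i ≠ wb j → f i j = 0) := by
    intro j h2
    have := ho j
    rw [if_pos h2] at this
    exact this
  have hw1 : ∀ j, (Finset.univ.filter (fun i => f i j = 1/2)).card ≠ 2 →
      (wa j = wb j ∧ f (wa j) j = 1 ∧ ∀ i, i ≠ wa j → f i j = 0) := by
    intro j h2
    have := ho j
    rw [if_neg h2] at this
    exact this
  have hport : ∀ j i, f i j = 1/2 → (cond (decide (wb j = i)) (wb j) (wa j)) = i := by
    intro j i hij
    obtain ⟨hab, hfa, hfb, hoth⟩ := hw2 j (hmemhalf i j hij)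
    by_cases h : wb j = i
    · simp [h]
    · simp only [decide_eq_false h, cond_false]
      by_cases h' : wa j = i
      · exact h'
      · exfalso
        have := hoth i (fun e => h' e.symm) (fun e => h e.symm)
        rw [this] at hij; norm_num at hij
  have hcondhalf : ∀ j (b : Bool), (Finset.univ.filter (fun i => f i j = 1/2)).card = 2 →
      f (cond b (wb j) (wa j)) j = 1/2 := by
    intro j b h2
    obtain ⟨hab, hfa, hfb, hoth⟩ := hw2 j h2
    rcases b
    · simpa only [cond_false] using hfa
    · simpa only [cond_true] using hfb
  have hMspec : ∀ (i : Fin n) (j : Fin m) (b : Bool), f i j = 1/2 →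
      cond b (wb j) (wa j) = i →
      M (j, b) = ((L i)[(partnerIdx ((L i).idxOf j))]?).map
        (fun j' => (j', decide (wb j' = i))) := by
    intro i j b hij hcond
    rw [hM]
    dsimp only
    rw [if_pos (hmemhalf i j hij), hcond]
  have hMsymm : ∀ p q, M p = some q → M q = some p := by
    intro p q h
    rcases p with ⟨j, b⟩
    rw [hM] at h
    dsimp only at h
    by_cases h2 : (Finset.univ.filter (fun i => f i j = 1/2)).card = 2
    swap
    · rw [if_neg h2] at h; exact absurd h (by simp)
    rw [if_pos h2] at h
    obtain ⟨i, hi⟩ : ∃ i, cond b (wb j) (wa j) = i := ⟨_, rfl⟩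
    rw [hi] at h
    obtain ⟨j', hj', hq⟩ := Option.map_eq_some_iff.1 h
    have hfij : f i j = 1/2 := by rw [← hi]; exact hcondhalf j b h2
    have hjmem : j ∈ L i := (hLmem i j).2 hfij
    have hr : (L i).idxOf j < (L i).length := List.idxOf_lt_length_iff.2 hjmem
    obtain ⟨hp', hget⟩ := List.getElem?_eq_some_iff.1 hj'
    have hfij' : f i j' = 1/2 := (hLmem i j').1 (hget ▸ List.getElem_mem hp')
    have hb' := hport j' i hfij'
    have hspec' := hMspec i j' (decide (wb j' = i)) hfij' hb'
    have hidx' : (L i).idxOf j' = partnerIdx ((L i).idxOf j) := by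
      rw [← hget]; exact List.Nodup.idxOf_getElem (hLnd i) _ _
    rw [hidx', partnerIdx_partnerIdx hr hp'] at hspec'
    have hbb : decide (wb j = i) = b := by
      rcases b with _ | _
      · simp only [cond_false] at hi
        obtain ⟨hab, _, _, _⟩ := hw2 j h2
        exact decide_eq_false (fun e => hab (hi.trans e.symm))
      · simp only [cond_true] at hi
        exact decide_eq_true hi
    rw [← hq, hspec', List.getElem?_eq_getElem hr, List.getElem_idxOf hr]
    simp only [Option.map_some, hbb]
  have hMne : ∀ p, M p ≠ some p := by
    intro p h
    rcases p with ⟨j, b⟩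
    rw [hM] at h
    dsimp only at h
    by_cases h2 : (Finset.univ.filter (fun i => f i j = 1/2)).card = 2
    swap
    · rw [if_neg h2] at h; exact absurd h (by simp)
    rw [if_pos h2] at h
    obtain ⟨i, hi⟩ : ∃ i, cond b (wb j) (wa j) = i := ⟨_, rfl⟩
    rw [hi] at h
    obtain ⟨j', hj', hq⟩ := Option.map_eq_some_iff.1 h
    have hfij : f i j = 1/2 := by rw [← hi]; exact hcondhalf j b h2
    have hjmem : j ∈ L i := (hLmem i j).2 hfij
    have hr : (L i).idxOf j < (L i).length := List.idxOf_lt_length_iff.2 hjmem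
    obtain ⟨hp', hget⟩ := List.getElem?_eq_some_iff.1 hj'
    have hjj : j' = j := congrArg Prod.fst hq
    have hidx' := List.Nodup.idxOf_getElem (hLnd i) _ hp'
    rw [hget, hjj] at hidx'
    exact partnerIdx_ne _ hidx'.symm
  obtain ⟨x, hx⟩ := xor_solve (S := (Finset.univ : Finset (Fin m))) M hMsymm hMne
    (fun p q h => Finset.mem_univ _)
  set A1 : Fin m → Fin n := fun j => cond (x j) (wb j) (wa j) with hA1
  set A2 : Fin m → Fin n := fun j => cond (x j) (wa j) (wb j) with hA2
  have hstruct : ∀ j,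
      (A1 j = A2 j ∧ f (A1 j) j = 1 ∧ ∀ i, i ≠ A1 j → f i j = 0) ∨
      (A1 j ≠ A2 j ∧ f (A1 j) j = 1/2 ∧ f (A2 j) j = 1/2 ∧
        (∀ i, i ≠ A1 j → i ≠ A2 j → f i j = 0)) := by
    intro j
    by_cases h2 : (Finset.univ.filter (fun i => f i j = 1/2)).card = 2
    · right
      obtain ⟨hab, hfa, hfb, hoth⟩ := hw2 j h2
      rw [hA1, hA2]; dsimp only
      rcases x j
      · simp only [cond_false]
        exact ⟨fun e => hab e, hfa, hfb, fun i ha hb => hoth i ha hb⟩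
      · simp only [cond_true]
        exact ⟨fun e => hab e.symm, hfb, hfa, fun i ha hb => hoth i hb ha⟩
    · left
      obtain ⟨hab, hfa, hoth⟩ := hw1 j h2
      rw [hA1, hA2]; dsimp only
      rcases x j
      · simp only [cond_false]
        exact ⟨hab, hfa, hoth⟩
      · simp only [cond_true]
        exact ⟨hab.symm, by rw [← hab]; exact hfa, fun i hi => hoth i (by rw [hab]; exact hi)⟩
  have hA1iff : ∀ j i, f i j = 1/2 → ((A1 j = i) ↔ x j = decide (wb j = i)) := by
    intro j i hf
    obtain ⟨hab, hfa, hfb, hoth⟩ := hw2 j (hmemhalf i j hf)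
    have hior : i = wa j ∨ i = wb j := by
      by_contra hc
      push_neg at hc
      have := hoth i hc.1 hc.2
      rw [this] at hf; norm_num at hf
    rw [hA1]; dsimp only
    rcases hxj : x j
    · simp only [cond_false]
      constructor
      · intro hwai
        rw [decide_eq_false (fun e => hab (hwai.trans e.symm))]
      · intro hdec
        have hne : wb j ≠ i := by
          intro e; rw [decide_eq_true e] at hdec; cases hdec
        rcases hior with h|h
        · exact h.symm
        · exact absurd h.symm hne
    · simp only [cond_true]
      constructor
      · intro hwbi; rw [decide_eq_true hwbi]
      · intro hdec
        exact of_decide_eq_true hdec.symm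
  have hexact : ∀ j i, f i j = 1/2 → ((A2 j = i) ↔ ¬ (A1 j = i)) := by
    intro j i hf
    rcases hstruct j with ⟨heq, hone, hoth⟩ | ⟨hne12, hfa1, hfa2, hoth⟩
    · exfalso
      by_cases he : A1 j = i
      · rw [he] at hone; rw [hone] at hf; norm_num at hf
      · have := hoth i (fun e => he e.symm); rw [this] at hf; norm_num at hf
    · constructor
      · intro h2 h1
        exact hne12 (h1.trans h2.symm)
      · intro h1
        by_contra h2
        have := hoth i (fun e => h1 e.symm) (fun e => h2 e.symm)
        rw [this] at hf; norm_num at hf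
  have hpairing : ∀ (i : Fin n) (t : ℕ) (h : 2*t+1 < (L i).length),
      ((A1 ((L i)[2*t]'(by omega)) = i) ↔ ¬ (A1 ((L i)[2*t+1]'h) = i)) := by
    intro i t h
    have hlt : 2*t < (L i).length := by omega
    have hfij : f i ((L i)[2*t]'hlt) = 1/2 := (hLmem i _).1 (List.getElem_mem hlt)
    have hfij' : f i ((L i)[2*t+1]'h) = 1/2 := (hLmem i _).1 (List.getElem_mem h)
    have hspec := hMspec i ((L i)[2*t]'hlt) (decide (wb ((L i)[2*t]'hlt) = i)) hfij
      (hport _ i hfij)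
    rw [List.Nodup.idxOf_getElem (hLnd i) (2*t) hlt] at hspec
    have hpi : partnerIdx (2*t) = 2*t+1 := by
      unfold partnerIdx; rw [if_pos (by omega)]
    rw [hpi, List.getElem?_eq_getElem h, Option.map_some] at hspec
    have hcon := hx _ _ hspec
    dsimp only at hcon
    rw [← hA1iff _ i hfij, ← hA1iff _ i hfij'] at hcon
    exact hcon
  have hA1mem : ∀ j, f (A1 j) j = 1/2 ∨ f (A1 j) j = 1 := by
    intro j
    rcases hstruct j with ⟨_, h, _⟩ | ⟨_, h, _, _⟩
    · exact Or.inr h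
    · exact Or.inl h
  have hA2mem : ∀ j, f (A2 j) j = 1/2 ∨ f (A2 j) j = 1 := by
    intro j
    rcases hstruct j with ⟨heq, h, _⟩ | ⟨_, _, h, _⟩
    · exact Or.inr (heq ▸ h)
    · exact Or.inl h
  -- part (i)
  have parti : ∀ i j, ((if A1 j = i then (1 : ℝ) else 0) + (if A2 j = i then 1 else 0))
      = 2 * f i j := by
    intro i j
    rcases hstruct j with ⟨heq, hone, hoth⟩ | ⟨hne12, hfa1, hfa2, hoth⟩
    · by_cases h1 : A1 j = i
      · rw [if_pos h1, if_pos (heq ▸ h1), ← h1, hone]; norm_num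
      · rw [if_neg h1, if_neg (heq ▸ h1), hoth i (fun e => h1 e.symm)]; norm_num
    · by_cases h1 : A1 j = i
      · rw [if_pos h1, if_neg (fun h2 => hne12 (h1.trans h2.symm)), ← h1, hfa1]
        norm_num
      · by_cases h2 : A2 j = i
        · rw [if_neg h1, if_pos h2, ← h2, hfa2]; norm_num
        · rw [if_neg h1, if_neg h2,
            hoth i (fun e => h1 e.symm) (fun e => h2 e.symm)]
          norm_num
  refine ⟨A1, A2, parti, ?_, ?_⟩
  · -- part (ii)
    intro i
    rw [Finset.sum_filter, Finset.sum_filter, ← Finset.sum_add_distrib]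
    rw [Finset.mul_sum]
    apply Finset.sum_congr rfl
    intro j _
    have := parti i j
    calc (if A1 j = i then val i j else 0) + (if A2 j = i then val i j else 0)
        = val i j * ((if A1 j = i then (1:ℝ) else 0) + (if A2 j = i then 1 else 0)) := by
          split_ifs <;> ring
    _ = val i j * (2 * f i j) := by rw [this]
    _ = 2 * (val i j * f i j) := by ring
  · -- part (iii)
    intro i c hc hcb
    have hval_split : ∑ j, val i j * f i j
        = (∑ j ∈ Finset.univ.filter (fun j => f i j = 1), val i j)
          + (∑ j ∈ Finset.univ.filter (fun j => f i j = 1/2), val i j)/2 := by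
      rw [Finset.sum_filter, Finset.sum_filter, Finset.sum_div, ← Finset.sum_add_distrib]
      apply Finset.sum_congr rfl
      intro j _
      rcases hhalf i j with h|h|h <;> rw [h] <;> norm_num <;> ring
    have hsplitA : ∀ (A : Fin m → Fin n), (∀ j, f (A j) j = 1/2 ∨ f (A j) j = 1) →
        ∑ j ∈ Finset.univ.filter (fun j => A j = i), val i j
          = (∑ j ∈ Finset.univ.filter (fun j => f i j = 1), val i j)
            + ∑ j ∈ Finset.univ.filter (fun j => f i j = 1/2),
                (if A j = i then val i j else 0) := by
      intro A hA
      rw [Finset.sum_filter, Finset.sum_filter, Finset.sum_filter, ← Finset.sum_add_distrib]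
      apply Finset.sum_congr rfl
      intro j _
      by_cases hAj : A j = i
      · rw [if_pos hAj]
        rcases hA j with h | h <;> rw [hAj] at h
        · rw [if_neg (show f i j ≠ 1 by rw [h]; norm_num), if_pos h]
          norm_num
        · rw [if_pos h, if_neg (show f i j ≠ 1/2 by rw [h]; norm_num)]
          norm_num
      · rw [if_neg hAj]
        have hf1 : f i j ≠ 1 := by
          intro h1
          rcases hA j with h | h
          · have := hfull_unique j i h1 (A j) (fun e => hAj e)
            rw [this] at h; norm_num at h
          · have := hfull_unique j (A j) h i (fun e => hAj e.symm)
            rw [this] at h1; norm_num at h1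
        rw [if_neg hf1]
        simp
    set Hi := Finset.univ.filter (fun j => f i j = 1/2) with hHi
    set S1 := ∑ j ∈ Hi, (if A1 j = i then val i j else 0) with hS1
    set S2 := ∑ j ∈ Hi, (if A1 j = i then 0 else val i j) with hS2
    have hTot : (∑ j ∈ Hi, val i j) = S1 + S2 := by
      rw [hS1, hS2, ← Finset.sum_add_distrib]
      apply Finset.sum_congr rfl
      intro j _
      split_ifs <;> ring
    have hS2' : ∑ j ∈ Hi, (if A2 j = i then val i j else 0) = S2 := by
      rw [hS2]
      apply Finset.sum_congr rfl
      intro j hj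
      have hfij : f i j = 1/2 := (Finset.mem_filter.1 hj).2
      have hiff := hexact j i hfij
      by_cases h1 : A1 j = i
      · rw [if_pos h1, if_neg (fun h2 => (hiff.1 h2) h1)]
      · rw [if_neg h1, if_pos (hiff.2 h1)]
    have hsigned : |S1 - S2| ≤ c := by
      have h1 : ((L i).map (fun j => (val i j, decide (A1 j = i)))).Pairwise
          (fun a b => b.1 ≤ a.1) :=
        List.Pairwise.map _ (fun a b hab => hab) (hLsort i)
      have h2 : ∀ p ∈ (L i).map (fun j => (val i j, decide (A1 j = i))), 0 ≤ p.1 := by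
        intro p hp
        obtain ⟨j, _, rfl⟩ := List.mem_map.1 hp
        exact hval i j
      have h3 : ∀ (t : ℕ) (h : 2*t+1 < ((L i).map (fun j => (val i j, decide (A1 j = i)))).length),
          ((((L i).map (fun j => (val i j, decide (A1 j = i))))[2*t]'(by omega)).2)
            = !((((L i).map (fun j => (val i j, decide (A1 j = i))))[2*t+1]'h).2) := by
        intro t ht
        have ht' : 2*t+1 < (L i).length := by
          rw [List.length_map] at ht; exact ht
        have hlt : 2*t < (L i).length := by omega
        rw [List.getElem_map, List.getElem_map]
        have hiff := hpairing i t ht'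
        dsimp only
        by_cases hP : A1 ((L i)[2*t]'hlt) = i
        · have hQ := hiff.1 hP
          rw [decide_eq_true hP, decide_eq_false hQ]
          rfl
        · have hQ : A1 ((L i)[2*t+1]'ht') = i := by
            by_contra hQ'
            exact hP (hiff.2 hQ')
          rw [decide_eq_false hP, decide_eq_true hQ]
          rfl
      have h4 := signed_bound ((L i).map (fun j => (val i j, decide (A1 j = i)))).length
        ((L i).map (fun j => (val i j, decide (A1 j = i)))) le_rfl h1 h2 h3
      have h5 : ((((L i).map (fun j => (val i j, decide (A1 j = i)))).map Prod.fst).headD 0) ≤ c := by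
        rcases hLL : (L i) with _ | ⟨j0, tl⟩
        · simpa using hc
        · simp only [List.map_cons, List.headD_cons]
          apply hcb j0
          exact (hLmem i j0).1 (by rw [hLL]; exact List.mem_cons_self)
      have h6 : ((((L i).map (fun j => (val i j, decide (A1 j = i))))).map
          (fun p => cond p.2 p.1 (-p.1))).sum = S1 - S2 := by
        rw [List.map_map]
        have hfun : ((fun p : ℝ × Bool => cond p.2 p.1 (-p.1)) ∘
            (fun j => (val i j, decide (A1 j = i))))
            = fun j => cond (decide (A1 j = i)) (val i j) (-(val i j)) := rfl
        rw [hfun]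
        have hperm := (hLperm i).map
          (fun j => cond (decide (A1 j = i)) (val i j) (-(val i j)))
        rw [hperm.sum_eq, list_sum_finset]
        rw [hS1, hS2, ← Finset.sum_sub_distrib]
        apply Finset.sum_congr rfl
        intro j _
        by_cases hAj : A1 j = i
        · simp [hAj]
        · simp [hAj]
      rw [h6] at h4
      exact le_trans h4 h5
    rw [hval_split, hsplitA A1 hA1mem, hsplitA A2 hA2mem, hS2']
    rw [abs_le] at hsigned
    constructor
    · have := hsigned.2
      rw [← hS1]
      linarith [hTot]
    · have := hsigned.1
      linarith [hTot]
end

section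
/- Let A be an integral allocation maximizing the truncated social welfare ∑_i v̄_i(A_i) over all allocations, where v̄_i(S) = min(t, v_i(S)) for a constant t > 0. Then for every agent i* and every set S of items, the contribution of S to A with respect to v̄ satisfies C^A_{v̄}(S) ≥ v̄_{i*}(S) − v̄_{i*}(A_{i*}). -/
/-- If the allocation `A` (a partition of the items) maximizes the
truncated social welfare `∑ i, min t (v i (A i))` over all allocations, then for every
agent `i'` and every set `S` of items, the contribution of `S` to `A` with respect to
the truncated valuations satisfies
`∑ i (min t (v i (A i)) − min t (v i (A i \ S))) ≥ min t (v i' S) − min t (v i' (A i'))`. -/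
theorem stmt_13 {ι : Type*} [Fintype ι] [DecidableEq ι] (n : ℕ) (t : ℝ) (ht : 0 < t)
    (v : Fin n → Finset ι → ℝ) (hmono : ∀ i S T, S ⊆ T → v i S ≤ v i T)
    (A : Fin n → Finset ι)
    (hAdisj : ∀ i i', i ≠ i' → Disjoint (A i) (A i'))
    (hAcover : Finset.univ.biUnion A = Finset.univ)
    (hmax : ∀ B : Fin n → Finset ι,
      (∀ i i', i ≠ i' → Disjoint (B i) (B i')) →
      Finset.univ.biUnion B = Finset.univ →
      ∑ i, min t (v i (B i)) ≤ ∑ i, min t (v i (A i)))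
    (i' : Fin n) (S : Finset ι) :
    min t (v i' S) - min t (v i' (A i')) ≤
      ∑ i, (min t (v i (A i)) - min t (v i (A i \ S))) := by
  classical
  set B : Fin n → Finset ι := fun i => if i = i' then A i' ∪ S else A i \ S with hB
  have hBdisj : ∀ i j, i ≠ j → Disjoint (B i) (B j) := by
    intro i j hij
    by_cases hi : i = i' <;> by_cases hj : j = i'
    · exact absurd (hi.trans hj.symm) hij
    · simp only [hB, if_pos hi, if_neg hj]
      refine Finset.disjoint_union_left.mpr ⟨?_, ?_⟩
      · exact (hi ▸ hAdisj i j hij).mono_right Finset.sdiff_subset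
      · exact Finset.disjoint_sdiff
    · simp only [hB, if_neg hi, if_pos hj]
      refine Finset.disjoint_union_right.mpr ⟨?_, ?_⟩
      · exact (hj ▸ hAdisj i j hij).mono_left Finset.sdiff_subset
      · exact Finset.sdiff_disjoint
    · simp only [hB, if_neg hi, if_neg hj]
      exact (hAdisj i j hij).mono Finset.sdiff_subset Finset.sdiff_subset
  have hBcover : Finset.univ.biUnion B = Finset.univ := by
    apply Finset.eq_univ_iff_forall.mpr
    intro x
    have hx : x ∈ Finset.univ.biUnion A := by rw [hAcover]; exact Finset.mem_univ x
    obtain ⟨i, -, hxi⟩ := Finset.mem_biUnion.mp hx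
    rw [Finset.mem_biUnion]
    by_cases hxS : x ∈ S
    · exact ⟨i', Finset.mem_univ _, by simp [hB, hxS]⟩
    · by_cases hi : i = i'
      · exact ⟨i', Finset.mem_univ _, by simp [hB, hi ▸ hxi]⟩
      · exact ⟨i, Finset.mem_univ _, by simp [hB, hi, hxi, hxS]⟩
  have hkey := hmax B hBdisj hBcover
  have hsplitB : ∑ i, min t (v i (B i)) =
      min t (v i' (A i' ∪ S)) + ∑ i ∈ Finset.univ.erase i', min t (v i (A i \ S)) := by
    rw [← Finset.add_sum_erase _ _ (Finset.mem_univ i')]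
    congr 1
    · simp [hB]
    · apply Finset.sum_congr rfl
      intro i hi
      have : i ≠ i' := (Finset.mem_erase.mp hi).1
      simp [hB, this]
  have hsplitA : ∑ i, min t (v i (A i \ S)) =
      min t (v i' (A i' \ S)) + ∑ i ∈ Finset.univ.erase i', min t (v i (A i \ S)) := by
    rw [← Finset.add_sum_erase _ _ (Finset.mem_univ i')]
  have h1 : min t (v i' S) ≤ min t (v i' (A i' ∪ S)) :=
    min_le_min le_rfl (hmono i' S (A i' ∪ S) Finset.subset_union_right)
  have h2 : min t (v i' (A i' \ S)) ≤ min t (v i' (A i')) :=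
    min_le_min le_rfl (hmono i' _ _ Finset.sdiff_subset)
  have hsum : ∑ i, (min t (v i (A i)) - min t (v i (A i \ S))) =
      ∑ i, min t (v i (A i)) - ∑ i, min t (v i (A i \ S)) := by
    rw [Finset.sum_sub_distrib]
  rw [hsum, hsplitA]
  rw [hsplitB] at hkey
  linarith
end

section
/- Let u be an additive nonnegative valuation on a finite set X of items with u(X) ≥ 1, and let t = 6/13. Suppose every three-element subset of X has u-value less than t/2, and hence every item other than the top two has u-value less than t/6. Let g_1, g_2 be the two most valuable items and let X^1 be a minimal subset of X containing {g_1, g_2} with u(X^1) ≥ t. Then u(X ∖ X^1) ≥ t. -/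
/-- Let `u` be an additive nonnegative valuation on a finite set `X` with
at least 3 items and `u X ≥ 1`, let `t = 6/13`, and suppose every 3-element subset of
`X` has value `< t/2`. Let `g1, g2` be the two most valuable items and `X1 ⊆ X` a
minimal subset containing `{g1, g2}` with `u X1 ≥ t` (removing any element drops it
below `t`). Then `u (X \ X1) ≥ t`. -/
theorem stmt_15 {ι : Type*} [DecidableEq ι]
    (u : ι → ℝ) (hu : ∀ j, 0 ≤ u j)
    (X : Finset ι) (hXval : (1 : ℝ) ≤ ∑ j ∈ X, u j) (hXcard : 3 ≤ X.card)
    (h3 : ∀ S ⊆ X, S.card = 3 → ∑ j ∈ S, u j < (6 / 13 : ℝ) / 2)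
    (g1 g2 : ι) (hg1 : g1 ∈ X) (hg2 : g2 ∈ X) (hgne : g1 ≠ g2)
    (htop1 : ∀ g ∈ X, g ≠ g1 → u g ≤ u g1)
    (htop2 : ∀ g ∈ X, g ≠ g1 → g ≠ g2 → u g ≤ u g2)
    (X1 : Finset ι) (hX1sub : X1 ⊆ X) (hg1X1 : g1 ∈ X1) (hg2X1 : g2 ∈ X1)
    (hX1val : (6 / 13 : ℝ) ≤ ∑ j ∈ X1, u j)
    (hX1min : ∀ g ∈ X1, ∑ j ∈ X1.erase g, u j < (6 / 13 : ℝ)) :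
    (6 / 13 : ℝ) ≤ ∑ j ∈ X \ X1, u j := by
  -- sum over a 3-set {g1,g2,g}
  have hsum3 : ∀ g ∈ X, g ≠ g1 → g ≠ g2 →
      u g1 + u g2 + u g < (3 / 13 : ℝ) := by
    intro g hg hgg1 hgg2
    have hcard : ({g1, g2, g} : Finset ι).card = 3 := by
      rw [Finset.card_insert_of_notMem, Finset.card_insert_of_notMem,
        Finset.card_singleton]
      · simp [Ne.symm hgg2]
      · simp [hgne, Ne.symm hgg1]
    have hsub : ({g1, g2, g} : Finset ι) ⊆ X := by
      intro x hx
      simp only [Finset.mem_insert, Finset.mem_singleton] at hx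
      rcases hx with rfl | rfl | rfl <;> assumption
    have := h3 _ hsub hcard
    have hexp : ∑ j ∈ ({g1, g2, g} : Finset ι), u j = u g1 + u g2 + u g := by
      rw [Finset.sum_insert, Finset.sum_insert, Finset.sum_singleton]
      · ring
      · simp [Ne.symm hgg2]
      · simp [hgne, Ne.symm hgg1]
    rw [hexp] at this
    linarith
  -- small items
  have hsmall : ∀ g ∈ X, g ≠ g1 → g ≠ g2 → u g < (1 / 13 : ℝ) := by
    intro g hg hgg1 hgg2
    have h1 := htop1 g hg hgg1
    have h2 := htop2 g hg hgg1 hgg2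
    have := hsum3 g hg hgg1 hgg2
    linarith
  -- X1 contains an element other than g1, g2
  obtain ⟨g, hgX1, hgg1, hgg2⟩ : ∃ g ∈ X1, g ≠ g1 ∧ g ≠ g2 := by
    by_contra h
    push_neg at h
    have hsub : X1 ⊆ ({g1, g2} : Finset ι) := by
      intro x hx
      simp only [Finset.mem_insert, Finset.mem_singleton]
      by_cases hx1 : x = g1
      · exact Or.inl hx1
      by_cases hx2 : x = g2
      · exact Or.inr hx2
      exact absurd (h x hx hx1) hx2
    -- pick a third element g3 ∈ X
    have hcard' : 1 ≤ (X \ ({g1, g2} : Finset ι)).card := by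
      have hpsub : ({g1, g2} : Finset ι) ⊆ X := by
        intro x hx
        simp only [Finset.mem_insert, Finset.mem_singleton] at hx
        rcases hx with rfl | rfl <;> assumption
      have hc := Finset.card_sdiff_of_subset hpsub
      have h2 : ({g1, g2} : Finset ι).card ≤ 2 := Finset.card_insert_le _ _
      omega
    obtain ⟨g3, hg3⟩ := Finset.card_pos.mp hcard'
    have hg3X : g3 ∈ X := (Finset.mem_sdiff.mp hg3).1
    have hg3n : g3 ≠ g1 ∧ g3 ≠ g2 := by
      have := (Finset.mem_sdiff.mp hg3).2
      simp only [Finset.mem_insert, Finset.mem_singleton] at this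
      push_neg at this; exact this
    have h12 := hsum3 g3 hg3X hg3n.1 hg3n.2
    have hX1le : ∑ j ∈ X1, u j ≤ ∑ j ∈ ({g1, g2} : Finset ι), u j :=
      Finset.sum_le_sum_of_subset_of_nonneg hsub fun i _ _ => hu i
    have hexp2 : ∑ j ∈ ({g1, g2} : Finset ι), u j = u g1 + u g2 := by
      rw [Finset.sum_insert (by simp [hgne]), Finset.sum_singleton]
    have hg3pos := hu g3
    rw [hexp2] at hX1le
    linarith
  have hgsmall := hsmall g (hX1sub hgX1) hgg1 hgg2
  have herase := hX1min g hgX1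
  have hsplit : ∑ j ∈ X1, u j = ∑ j ∈ X1.erase g, u j + u g := by
    exact (Finset.sum_erase_add X1 u hgX1).symm
  have hX1lt : ∑ j ∈ X1, u j < 7 / 13 := by rw [hsplit]; linarith
  have hsd : ∑ j ∈ X \ X1, u j = ∑ j ∈ X, u j - ∑ j ∈ X1, u j :=
    Finset.sum_sdiff_eq_sub hX1sub
  rw [hsd]
  linarith
end

section
/- Let t = 6/13. Let u be an additive nonnegative valuation on a finite item set X with u(X) > 1 − t/2, and suppose every singleton has u-value < t/2 and every three-element subset has value < t/2 (so all but the top two items have value < t/6). Let g_1, g_2 be the two most valuable items and X^1 a minimal superset of {g_1,g_2} with u(X^1) ≥ 2t/3; set X^2 = X∖X^1. Then u(X^1) < 5t/6 and min(t, u(X^1)) + min(t, u(X^2)) ≥ (2/3)t + t. -/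
/-- With `t = 6/13`: let `u` be an additive nonnegative valuation on a
finite set `X` with at least 3 items and `u X > 1 − t/2`, where every singleton has
value `< t/2` and every 3-element subset has value `< t/2`. Let `g1, g2` be the two most
valuable items and `X1 ⊆ X` a minimal subset containing `{g1, g2}` with `u X1 ≥ 2t/3`;
set `X2 = X \ X1`. Then `u X1 < 5t/6` and
`min t (u X1) + min t (u X2) ≥ (2/3) t + t`. -/
theorem stmt_16 {ι : Type*} [DecidableEq ι]
    (u : ι → ℝ) (hu : ∀ j, 0 ≤ u j)
    (X : Finset ι) (hXval : 1 - (6 / 13 : ℝ) / 2 < ∑ j ∈ X, u j) (hXcard : 3 ≤ X.card)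
    (hsingle : ∀ g ∈ X, u g < (6 / 13 : ℝ) / 2)
    (h3 : ∀ S ⊆ X, S.card = 3 → ∑ j ∈ S, u j < (6 / 13 : ℝ) / 2)
    (g1 g2 : ι) (hg1 : g1 ∈ X) (hg2 : g2 ∈ X) (hgne : g1 ≠ g2)
    (htop1 : ∀ g ∈ X, g ≠ g1 → u g ≤ u g1)
    (htop2 : ∀ g ∈ X, g ≠ g1 → g ≠ g2 → u g ≤ u g2)
    (X1 : Finset ι) (hX1sub : X1 ⊆ X) (hg1X1 : g1 ∈ X1) (hg2X1 : g2 ∈ X1)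
    (hX1val : (2 / 3 : ℝ) * (6 / 13) ≤ ∑ j ∈ X1, u j)
    (hX1min : ∀ g ∈ X1, ∑ j ∈ X1.erase g, u j < (2 / 3 : ℝ) * (6 / 13)) :
    (∑ j ∈ X1, u j < (5 / 6 : ℝ) * (6 / 13)) ∧
    (2 / 3 : ℝ) * (6 / 13) + (6 / 13) ≤
      min (6 / 13 : ℝ) (∑ j ∈ X1, u j) + min (6 / 13 : ℝ) (∑ j ∈ X \ X1, u j) := by

  -- obtain a third element g3 of X
  have hg2e : g2 ∈ X.erase g1 := Finset.mem_erase.2 ⟨hgne.symm, hg2⟩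
  have hcard : 1 ≤ ((X.erase g1).erase g2).card := by
    have h1 := Finset.card_erase_of_mem hg1
    have h2 := Finset.card_erase_of_mem hg2e
    omega
  obtain ⟨g3, hg3⟩ := Finset.card_pos.1 hcard
  have hg3' := Finset.mem_erase.1 hg3
  have hg32 : g3 ≠ g2 := hg3'.1
  have hg31 : g3 ≠ g1 := (Finset.mem_erase.1 hg3'.2).1
  have hg3X : g3 ∈ X := (Finset.mem_erase.1 hg3'.2).2
  -- sum over {g1,g2,g3}
  have hns : g1 ∉ ({g2, g3} : Finset ι) := by simp [hgne, Ne.symm hg31]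
  have hns2 : g2 ∉ ({g3} : Finset ι) := by simp [Ne.symm hg32]
  have hsub3 : ({g1, g2, g3} : Finset ι) ⊆ X := by
    intro x hx; simp at hx; rcases hx with h|h|h <;> subst h <;> assumption
  have hcard3 : ({g1, g2, g3} : Finset ι).card = 3 := by
    rw [Finset.card_insert_of_notMem hns, Finset.card_insert_of_notMem hns2,
      Finset.card_singleton]
  have hsum3 : u g1 + u g2 + u g3 < (6 / 13 : ℝ) / 2 := by
    have := h3 _ hsub3 hcard3
    rw [Finset.sum_insert hns, Finset.sum_insert hns2, Finset.sum_singleton] at this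
    linarith
  -- third items are small
  have hsmall : ∀ g ∈ X, g ≠ g1 → g ≠ g2 → u g < (6 / 13 : ℝ) / 6 := by
    intro g hgX hgg1 hgg2
    have h1 : u g ≤ u g2 := htop2 g hgX hgg1 hgg2
    have h2 : u g2 ≤ u g1 := htop1 g2 hg2 hgne.symm
    by_cases hgeq : g = g3
    · subst hgeq; linarith
    · have hns' : g1 ∉ ({g2, g} : Finset ι) := by simp [hgne, Ne.symm hgg1]
      have hns2' : g2 ∉ ({g} : Finset ι) := by simp [Ne.symm hgg2]
      have hsub' : ({g1, g2, g} : Finset ι) ⊆ X := by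
        intro x hx; simp at hx; rcases hx with h|h|h <;> subst h <;> assumption
      have hcard' : ({g1, g2, g} : Finset ι).card = 3 := by
        rw [Finset.card_insert_of_notMem hns', Finset.card_insert_of_notMem hns2',
          Finset.card_singleton]
      have := h3 _ hsub' hcard'
      rw [Finset.sum_insert hns', Finset.sum_insert hns2', Finset.sum_singleton] at this
      linarith
  -- Part 1
  have part1 : ∑ j ∈ X1, u j < (5 / 6 : ℝ) * (6 / 13) := by
    by_cases hex : ∃ g ∈ X1, g ≠ g1 ∧ g ≠ g2
    · obtain ⟨g, hgX1, hgg1, hgg2⟩ := hex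
      have hmin := hX1min g hgX1
      have hsum : ∑ j ∈ X1.erase g, u j + u g = ∑ j ∈ X1, u j :=
        Finset.sum_erase_add _ _ hgX1
      have := hsmall g (hX1sub hgX1) hgg1 hgg2
      linarith
    · push_neg at hex
      have hsub12 : X1 ⊆ ({g1, g2} : Finset ι) := by
        intro x hx
        simp only [Finset.mem_insert, Finset.mem_singleton]
        by_cases h : x = g1
        · exact Or.inl h
        · exact Or.inr (hex x hx h)
      have hle : ∑ j ∈ X1, u j ≤ ∑ j ∈ ({g1, g2} : Finset ι), u j :=
        Finset.sum_le_sum_of_subset_of_nonneg hsub12 (fun j _ _ => hu j)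
      have h12 : ∑ j ∈ ({g1, g2} : Finset ι), u j = u g1 + u g2 := by
        rw [Finset.sum_insert (by simp [hgne]), Finset.sum_singleton]
      have := hu g3
      linarith
  refine ⟨part1, ?_⟩
  have hX2 : ∑ j ∈ X \ X1, u j + ∑ j ∈ X1, u j = ∑ j ∈ X, u j :=
    Finset.sum_sdiff hX1sub
  have hm1 : min (6 / 13 : ℝ) (∑ j ∈ X1, u j) = ∑ j ∈ X1, u j :=
    min_eq_right (by linarith)
  rcases le_total (6 / 13 : ℝ) (∑ j ∈ X \ X1, u j) with h | h
  · rw [hm1, min_eq_left h]; linarith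
  · rw [hm1, min_eq_right h]; linarith
end
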